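/- Assume C_R ⊆ m_R². Then the conductor of S, namely C_S = {f ∈ k⟦t⟧ : f·k⟦t⟧ ⊆ S}, equals C_R/x₁ = t^{c_R − a₁}·k⟦t⟧. -/

import Mathlib

open PowerSeries
set_option synthInstance.maxHeartbeats 1000000
set_option maxHeartbeats 1000000

noncomputable section

def mxl {k : Type*} [Field k] (R : Subalgebra k (PowerSeries k)) : Ideal R :=
  RingHom.ker ((constantCoeff : PowerSeries k →+* k).comp R.val.toRingHom)

/-- A nonzero power series over a field is `X ^ d` times a unit, with `d` its order. -/
lemma decompPS {k : Type*} [Field k] {f : PowerSeries k} (hf : f ≠ 0) :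
    ∃ (d : ℕ) (V : (PowerSeries k)ˣ), f.order = d ∧ f = (X : PowerSeries k) ^ d * V := by
  have hlt : f.order < ⊤ := (order_finite_iff_ne_zero.mpr hf)
  refine ⟨f.order.lift hlt, (isUnit_divided_by_X_pow_order hf).unit, ?_, ?_⟩
  · exact (ENat.coe_lift _ hlt).symm
  · rw [IsUnit.unit_spec]
    rw [ENat.lift_eq_toNat_of_lt_top hlt]
    exact X_pow_order_mul_divXPowOrder.symm

/-- Transfer of conductor-type conditions along a unit. -/
lemma shiftPS {k : Type*} [Field k] {f : PowerSeries k} {d : ℕ} (V : (PowerSeries k)ˣ)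
    (hf : f = (X : PowerSeries k) ^ d * V) (M : Set (PowerSeries k)) :
    (∀ g, f * g ∈ M) ↔ (∀ g, (X : PowerSeries k) ^ d * g ∈ M) := by
  constructor
  · intro h g
    have := h ((V⁻¹ : (PowerSeries k)ˣ) * g)
    rwa [hf, mul_assoc, Units.mul_inv_cancel_left] at this
  · intro h g
    rw [hf, mul_assoc]
    exact h _

theorem stmt6 {k : Type*} [Field k] [IsAlgClosed k] [CharZero k]
    (R : Subalgebra k (PowerSeries k)) (hR : R ≠ ⊤)
    (hN : ∃ N : ℕ, 1 ≤ N ∧ ∀ g : PowerSeries k, (X : PowerSeries k) ^ N * g ∈ R)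
    (c : ℕ) (hc : IsLeast {n : ℕ | ∀ g : PowerSeries k, (X : PowerSeries k) ^ n * g ∈ R} c)
    (a1 : ℕ) (ha1pos : 0 < a1) (x1 : PowerSeries k) (hx1R : x1 ∈ R)
    (hx1ord : x1.order = a1)
    (ha1min : ∀ f ∈ R, f ≠ 0 → constantCoeff f = 0 → (a1 : ℕ∞) ≤ f.order)
    (hC : ∀ r : R, (∀ g : PowerSeries k, (r : PowerSeries k) * g ∈ R) → r ∈ (mxl R) ^ 2)
    (S : Subalgebra k (PowerSeries k))
    (hS : S = Algebra.adjoin k ((R : Set (PowerSeries k)) ∪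
        {h : PowerSeries k | ∀ g : PowerSeries k, (x1 * h) * g ∈ R})) :
    -- the conductor of S equals C_R/x₁
    ({f : PowerSeries k | ∀ g : PowerSeries k, f * g ∈ S}
      = {h : PowerSeries k | ∀ g : PowerSeries k, (x1 * h) * g ∈ R}) ∧
    -- and equals t^(c_R - a₁)·k⟦t⟧
    ({f : PowerSeries k | ∀ g : PowerSeries k, f * g ∈ S}
      = {f : PowerSeries k | ∃ g : PowerSeries k, f = (X : PowerSeries k) ^ (c - a1) * g}) := by
  obtain ⟨hcmem, hcleast⟩ := hc
  -- c ≠ 0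
  have hc0 : c ≠ 0 := by
    intro h
    apply hR
    rw [Algebra.eq_top_iff]
    intro x
    have := hcmem x
    simpa [h] using this
  -- a1 ≤ c
  have hXcR : (X : PowerSeries k) ^ c ∈ R := by simpa using hcmem 1
  have hXcne : (X : PowerSeries k) ^ c ≠ 0 := pow_ne_zero _ X_ne_zero
  have hcc : constantCoeff ((X : PowerSeries k) ^ c) = 0 := by
    rw [map_pow, constantCoeff_X, zero_pow hc0]
  have ha1c : a1 ≤ c := by
    have := ha1min _ hXcR hXcne hcc
    rw [order_X_pow] at this
    exact_mod_cast this
  set e := c - a1 with he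
  have hae : a1 + e = c := by omega
  -- decompose x1
  have hx1ne : x1 ≠ 0 := by
    intro h
    rw [h, order_zero] at hx1ord
    simp at hx1ord
  obtain ⟨d1, U, hd1, hx1eq⟩ := decompPS hx1ne
  have hd1a : d1 = a1 := by
    rw [hd1] at hx1ord
    exact_mod_cast hx1ord
  rw [hd1a] at hx1eq
  -- C_R / x1 = X^e · k⟦t⟧
  have L1 : {h : PowerSeries k | ∀ g : PowerSeries k, (x1 * h) * g ∈ R}
      = {f : PowerSeries k | ∃ g : PowerSeries k, f = (X : PowerSeries k) ^ e * g} := by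
    ext h
    simp only [Set.mem_setOf_eq]
    constructor
    · intro hh
      by_cases h0 : h = 0
      · exact ⟨0, by simp [h0]⟩
      obtain ⟨d, V, _, heq⟩ := decompPS h0
      have hprod : x1 * h = (X : PowerSeries k) ^ (a1 + d) * ((U * V : (PowerSeries k)ˣ)) := by
        rw [hx1eq, heq, pow_add, Units.val_mul]; ring
      have hXR : ∀ g, (X : PowerSeries k) ^ (a1 + d) * g ∈ R :=
        (shiftPS (U * V) hprod (R : Set (PowerSeries k))).mp hh
      have hcle : c ≤ a1 + d := hcleast hXR
      refine ⟨(X : PowerSeries k) ^ (d - e) * V, ?_⟩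
      rw [heq, ← mul_assoc, ← pow_add]
      congr 2
      omega
    · rintro ⟨g, rfl⟩ g'
      have : x1 * ((X : PowerSeries k) ^ e * g) * g'
          = (X : PowerSeries k) ^ c * ((U : PowerSeries k) * g * g') := by
        rw [hx1eq, ← hae, pow_add]; ring
      rw [this]
      exact hcmem _
  -- every element of S is (elt of R) + X^e·(something)
  let P : Subalgebra k (PowerSeries k) :=
    { carrier := {f | ∃ r ∈ R, ∃ g : PowerSeries k, f = r + (X : PowerSeries k) ^ e * g}
      mul_mem' := by
        rintro a b ⟨r1, hr1, g1, rfl⟩ ⟨r2, hr2, g2, rfl⟩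
        exact ⟨r1 * r2, mul_mem hr1 hr2,
          r1 * g2 + g1 * r2 + (X : PowerSeries k) ^ e * (g1 * g2), by ring⟩
      one_mem' := ⟨1, one_mem R, 0, by simp⟩
      add_mem' := by
        rintro a b ⟨r1, hr1, g1, rfl⟩ ⟨r2, hr2, g2, rfl⟩
        exact ⟨r1 + r2, add_mem hr1 hr2, g1 + g2, by ring⟩
      zero_mem' := ⟨0, zero_mem R, 0, by simp⟩
      algebraMap_mem' := fun r => ⟨algebraMap k _ r, Subalgebra.algebraMap_mem R r, 0, by simp⟩ }
  have hSP : S ≤ P := by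
    rw [hS]
    apply Algebra.adjoin_le
    rintro f (hf | hf)
    · exact ⟨f, hf, 0, by simp⟩
    · rw [L1] at hf
      obtain ⟨g, rfl⟩ := hf
      exact ⟨0, zero_mem R, g, by simp⟩
  have hx1S : ∀ s ∈ S, x1 * s ∈ R := by
    intro s hs
    obtain ⟨r, hr, g, rfl⟩ := hSP hs
    have : x1 * (r + (X : PowerSeries k) ^ e * g)
        = x1 * r + (X : PowerSeries k) ^ c * ((U : PowerSeries k) * g) := by
      rw [hx1eq, ← hae, pow_add]; ring
    rw [this]
    exact add_mem (mul_mem hx1R hr) (hcmem _)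
  -- the conductor of S is X^e · k⟦t⟧
  have L2 : {f : PowerSeries k | ∀ g : PowerSeries k, f * g ∈ S}
      = {f : PowerSeries k | ∃ g : PowerSeries k, f = (X : PowerSeries k) ^ e * g} := by
    ext f
    simp only [Set.mem_setOf_eq]
    constructor
    · intro hf
      by_cases h0 : f = 0
      · exact ⟨0, by simp [h0]⟩
      obtain ⟨d, V, _, heq⟩ := decompPS h0
      have hXS : ∀ g, (X : PowerSeries k) ^ d * g ∈ S :=
        (shiftPS V heq (S : Set (PowerSeries k))).mp hf
      have hXR : ∀ g, (X : PowerSeries k) ^ (a1 + d) * g ∈ R := by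
        intro g
        have h1 : x1 * ((X : PowerSeries k) ^ d
            * (((U⁻¹ : (PowerSeries k)ˣ) : PowerSeries k) * g)) ∈ R :=
          hx1S _ (hXS _)
        have hu : (U : PowerSeries k) * ((U⁻¹ : (PowerSeries k)ˣ) : PowerSeries k) = 1 :=
          U.mul_inv
        have h2 : x1 * ((X : PowerSeries k) ^ d
            * (((U⁻¹ : (PowerSeries k)ˣ) : PowerSeries k) * g))
            = (X : PowerSeries k) ^ (a1 + d) * g := by
          calc x1 * ((X : PowerSeries k) ^ d
              * (((U⁻¹ : (PowerSeries k)ˣ) : PowerSeries k) * g))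
              = ((U : PowerSeries k) * ((U⁻¹ : (PowerSeries k)ˣ) : PowerSeries k))
                * ((X : PowerSeries k) ^ a1 * (X : PowerSeries k) ^ d * g) := by
                rw [hx1eq]; ring
            _ = (X : PowerSeries k) ^ (a1 + d) * g := by rw [hu, pow_add]; ring
        rwa [h2] at h1
      have hcle : c ≤ a1 + d := hcleast hXR
      refine ⟨(X : PowerSeries k) ^ (d - e) * V, ?_⟩
      rw [heq, ← mul_assoc, ← pow_add]
      congr 2
      omega
    · rintro ⟨g, rfl⟩ g'
      have hmem : (X : PowerSeries k) ^ e * (g * g') ∈ S := by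
        have hx : (X : PowerSeries k) ^ e * (g * g')
            ∈ {f : PowerSeries k | ∃ g : PowerSeries k, f = (X : PowerSeries k) ^ e * g} :=
          ⟨g * g', rfl⟩
        rw [← L1] at hx
        rw [hS]
        exact Algebra.subset_adjoin (Or.inr hx)
      rw [mul_assoc]
      exact hmem
  exact ⟨by rw [L2, L1], L2⟩

end
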